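/- Let s ≥ 2 be an integer. For z ∈ ℂ set ν(z) = 1 + z/(s−1), P(z) = 1/s + ((s−1)/s)·ν(z)^s, and, for each integer j with 2 ≤ j ≤ s, Q_j(z) = ((s−1)/s)·ν(z)^{s−j+1}. Then for every z ∈ ℂ with |P(z)| ≤ 1 and every 2 ≤ j ≤ s one has |Q_j(z)| ≤ (s+1)/s. -/

import Mathlib

/-- **Theorem 3.3.** For the optimal second order SSP Runge–Kutta method with `s ≥ 2`
stages, with `ν(z) = 1 + z/(s−1)`, stability polynomial
`P(z) = 1/s + ((s−1)/s)·ν(z)^s` and internal stability polynomials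
`Q_j(z) = ((s−1)/s)·ν(z)^{s−j+1}` for `2 ≤ j ≤ s`, every `z` in the absolute
stability region `|P(z)| ≤ 1` satisfies `|Q_j(z)| ≤ (s+1)/s`. -/
theorem ssp2_internal_amplification
    (s : ℕ) (hs : 2 ≤ s) (z : ℂ)
    (hz : ‖1 / (s : ℂ) +
      (((s : ℂ) - 1) / s) * (1 + z / ((s : ℂ) - 1)) ^ s‖ ≤ 1)
    (j : ℕ) (hj2 : 2 ≤ j) (hjs : j ≤ s) :
    ‖(((s : ℂ) - 1) / s) * (1 + z / ((s : ℂ) - 1)) ^ (s - j + 1)‖ ≤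
      ((s : ℝ) + 1) / s := by
  have hS2 : (2 : ℝ) ≤ (s : ℝ) := by exact_mod_cast hs
  have hSpos : (0 : ℝ) < (s : ℝ) := by linarith
  set ν : ℂ := 1 + z / ((s : ℂ) - 1) with hν
  set a : ℝ := ‖ν‖ with ha
  have ha0 : 0 ≤ a := norm_nonneg ν
  have hcabs : ‖((s : ℂ) - 1) / s‖ = ((s : ℝ) - 1) / s := by
    rw [norm_div]
    have h1 : ((s : ℂ) - 1) = ((((s : ℝ) - 1) : ℝ) : ℂ) := by push_cast; ring
    rw [h1, Complex.norm_real, Complex.norm_natCast, Real.norm_eq_abs,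
      abs_of_nonneg (by linarith : (0:ℝ) ≤ (s : ℝ) - 1)]
  have hQ : ‖(((s : ℂ) - 1) / s) * ν ^ (s - j + 1)‖ =
      ((s : ℝ) - 1) / s * a ^ (s - j + 1) := by
    rw [norm_mul, norm_pow, hcabs]
  rw [hQ]
  have hfrac : (0 : ℝ) ≤ ((s : ℝ) - 1) / s := div_nonneg (by linarith) (le_of_lt hSpos)
  -- main bound: ((s-1)/s) * a^s ≤ (s+1)/s
  have hmain : ((s : ℝ) - 1) / s * a ^ s ≤ ((s : ℝ) + 1) / s := by
    have heq : (((s : ℂ) - 1) / s) * ν ^ s =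
        (1 / (s : ℂ) + (((s : ℂ) - 1) / s) * ν ^ s) - 1 / (s : ℂ) := by ring
    have htri := norm_sub_le
      (1 / (s : ℂ) + (((s : ℂ) - 1) / s) * ν ^ s) (1 / (s : ℂ))
    rw [← heq] at htri
    have h1s : ‖1 / (s : ℂ)‖ = 1 / (s : ℝ) := by
      rw [norm_div, norm_one, Complex.norm_natCast]
    rw [norm_mul, norm_pow, hcabs, h1s] at htri
    have hb : ((s : ℝ) - 1) / s * a ^ s ≤ 1 + 1 / s := by linarith
    calc ((s : ℝ) - 1) / s * a ^ s ≤ 1 + 1 / s := hb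
      _ = ((s : ℝ) + 1) / s := by field_simp
  by_cases hc : a ≤ 1
  · have : a ^ (s - j + 1) ≤ 1 := pow_le_one₀ ha0 hc
    calc ((s : ℝ) - 1) / s * a ^ (s - j + 1) ≤ ((s : ℝ) - 1) / s * 1 :=
          mul_le_mul_of_nonneg_left this hfrac
      _ ≤ ((s : ℝ) + 1) / s := by
          rw [mul_one]; exact (div_le_div_iff_of_pos_right hSpos).mpr (by linarith)
  · push_neg at hc
    have hexp : s - j + 1 ≤ s := by omega
    have : a ^ (s - j + 1) ≤ a ^ s := pow_le_pow_right₀ (le_of_lt hc) hexp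
    calc ((s : ℝ) - 1) / s * a ^ (s - j + 1) ≤ ((s : ℝ) - 1) / s * a ^ s :=
          mul_le_mul_of_nonneg_left this hfrac
      _ ≤ ((s : ℝ) + 1) / s := hmain
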